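/- A sequence of monomials α₁,…,α_r in the polynomial ring K[x₁,…,xₙ] is a regular sequence if and only if their supports are pairwise disjoint, i.e., supp(α_i) ∩ supp(α_j) = ∅ for all 1 ≤ i ≠ j ≤ r. -/

import Mathlib

open MvPolynomial

private lemma mem_take_ofFn {r : ℕ} {β : Type*} (g : Fin r → β) (i : ℕ) (x : β) :
    x ∈ (List.ofFn g).take i ↔ ∃ j : Fin r, (j : ℕ) < i ∧ g j = x := by
  simp only [List.mem_take_iff_getElem, List.getElem_take, List.getElem_ofFn, List.length_take,
    List.length_ofFn, lt_min_iff]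
  constructor
  · rintro ⟨j, hj, rfl⟩
    exact ⟨⟨j, hj.2⟩, hj.1, rfl⟩
  · rintro ⟨j, hj, rfl⟩
    exact ⟨j, ⟨hj, j.2⟩, rfl⟩

private lemma span_take {K : Type} [Field K] {n r : ℕ} (α : Fin r → (Fin n →₀ ℕ)) (i : ℕ) :
    Ideal.ofList ((List.ofFn fun k => monomial (α k) (1 : K)).take i)
      = Ideal.span ((fun s => monomial s (1 : K)) '' (α '' {j : Fin r | (j : ℕ) < i})) := by
  have hset : {x : MvPolynomial (Fin n) K | x ∈ (List.ofFn fun k => monomial (α k) (1 : K)).take i}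
      = (fun s => monomial s (1 : K)) '' (α '' {j : Fin r | (j : ℕ) < i}) := by
    ext x
    simp only [Set.mem_setOf_eq, mem_take_ofFn, Set.mem_image, Set.image_image]
  rw [Ideal.ofList, hset]

private lemma mem_span_iff {K : Type} [Field K] {n r : ℕ} (α : Fin r → (Fin n →₀ ℕ)) (i : ℕ)
    (f : MvPolynomial (Fin n) K) :
    f ∈ Ideal.span ((fun s => monomial s (1 : K)) '' (α '' {j : Fin r | (j : ℕ) < i}))
      ↔ ∀ m ∈ f.support, ∃ j : Fin r, (j : ℕ) < i ∧ α j ≤ m := by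
  rw [mem_ideal_span_monomial_image]
  constructor
  · intro h m hm
    obtain ⟨si, hsi, hle⟩ := h m hm
    simp only [Set.mem_image, Set.mem_setOf_eq] at hsi
    obtain ⟨j, hj, hx⟩ := hsi
    exact ⟨j, hj, hx ▸ hle⟩
  · intro h m hm
    obtain ⟨j, hj, hle⟩ := h m hm
    exact ⟨α j, ⟨j, hj, rfl⟩, hle⟩

/-- A sequence of (nonconstant) monomials `α₁,…,α_r` in `K[x₁,…,xₙ]` is a regular
sequence if and only if their supports are pairwise disjoint. -/
theorem stmt_0 {K : Type} [Field K] {n : ℕ} {r : ℕ} (α : Fin r → (Fin n →₀ ℕ))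
    (hα : ∀ k, α k ≠ 0) :
    RingTheory.Sequence.IsRegular (MvPolynomial (Fin n) K)
        (List.ofFn fun k => monomial (α k) (1 : K))
      ↔ ∀ s t : Fin r, s ≠ t → Disjoint (α s).support (α t).support := by
  classical
  set R := MvPolynomial (Fin n) K with hR
  set rs : List R := List.ofFn fun k => monomial (α k) (1 : K) with hrs
  have hlen : rs.length = r := by simp [hrs]
  constructor
  · intro hreg
    by_contra hcon
    push_neg at hcon
    have hS : {t : Fin r | ∃ s, s < t ∧ ¬ Disjoint (α s).support (α t).support}.Nonempty := by
      obtain ⟨s, t, hst, hdis⟩ := hcon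
      rcases lt_or_gt_of_ne hst with h | h
      · exact ⟨t, s, h, hdis⟩
      · exact ⟨s, t, h, fun hd => hdis hd.symm⟩
    obtain ⟨t, ⟨s, hst, hdis⟩, hmin⟩ := wellFounded_lt.has_min _ hS
    obtain ⟨x, hxs, hxt⟩ := Finset.not_disjoint_iff.mp hdis
    set γ : Fin n →₀ ℕ := α s - (α s ⊓ α t) with hγdef
    have hγle : γ ≤ α s := tsub_le_self
    have hnotle : ¬ α s ≤ γ := by
      intro h
      have h1 := h x
      have h2 : γ x = α s x - min (α s x) (α t x) := by
        simp [hγdef, Finsupp.tsub_apply, Finsupp.inf_apply]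
      have hs1 : 1 ≤ α s x := Nat.one_le_iff_ne_zero.mpr (Finsupp.mem_support_iff.mp hxs)
      have ht1 : 1 ≤ α t x := Nat.one_le_iff_ne_zero.mpr (Finsupp.mem_support_iff.mp hxt)
      omega
    have hkey : α s ≤ γ + α t := by
      intro y
      have h2 : γ y = α s y - min (α s y) (α t y) := by
        simp [hγdef, Finsupp.tsub_apply, Finsupp.inf_apply]
      have : (γ + α t) y = γ y + α t y := Finsupp.add_apply _ _ _
      omega
    have hnotmem : (monomial γ (1 : K) : R) ∉
        Ideal.span ((fun s => monomial s (1 : K)) '' (α '' {j : Fin r | (j : ℕ) < (t : ℕ)})) := by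
      rw [mem_span_iff]
      intro h
      obtain ⟨j, hj, hle⟩ := h γ (by simp [support_monomial])
      have hjs : j ≠ s := fun h' => hnotle (h' ▸ hle)
      have hsup : (α j).support ⊆ (α s).support :=
        (Finsupp.support_mono hle).trans (Finsupp.support_mono hγle)
      have hnd : ¬ Disjoint (α j).support (α s).support := by
        intro hd
        obtain ⟨y, hy⟩ := Finsupp.support_nonempty_iff.mpr (hα j)
        exact Finset.disjoint_left.mp hd hy (hsup hy)
      have hjt : j < t := hj
      rcases lt_or_gt_of_ne hjs with h' | h'
      · exact hmin s ⟨j, h', hnd⟩ hst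
      · exact hmin j ⟨s, h', fun hd => hnd hd.symm⟩ hjt
    have hwt : (t : ℕ) < rs.length := by rw [hlen]; exact t.2
    have hsr := hreg.toIsWeaklyRegular.regular_mod_prev (t : ℕ) hwt
    have hI : (Ideal.ofList (rs.take (t : ℕ)) • ⊤ : Submodule R R)
        = Ideal.span ((fun s => monomial s (1 : K)) '' (α '' {j : Fin r | (j : ℕ) < (t : ℕ)})) := by
      rw [smul_eq_mul, Ideal.mul_top, hrs, span_take]
    have hget : rs[(t : ℕ)] = monomial (α t) (1 : K) := by
      simp [hrs]
    have h1 : rs[(t : ℕ)] • (Submodule.Quotient.mk (monomial γ (1 : K)) :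
        R ⧸ (Ideal.ofList (rs.take (t : ℕ)) • ⊤ : Submodule R R)) = 0 := by
      rw [← Submodule.Quotient.mk_smul, Submodule.Quotient.mk_eq_zero, hI]
      rw [hget, smul_eq_mul, monomial_mul, one_mul, add_comm]
      rw [mem_span_iff]
      intro m hm
      rw [support_monomial, if_neg one_ne_zero, Finset.mem_singleton] at hm
      subst hm
      exact ⟨s, hst, hkey⟩
    have h2 := hsr (h1.trans (smul_zero _).symm)
    rw [Submodule.Quotient.mk_eq_zero, hI] at h2
    exact hnotmem h2
  · intro hdisj
    refine ⟨⟨fun i hi => ?_⟩, ?_⟩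
    · have hi' : i < r := by rwa [hlen] at hi
      have hget : rs[i] = monomial (α ⟨i, hi'⟩) (1 : K) := by simp [hrs]
      rw [hget]
      intro a b hab
      obtain ⟨f, rfl⟩ := Submodule.Quotient.mk_surjective _ a
      obtain ⟨g, rfl⟩ := Submodule.Quotient.mk_surjective _ b
      replace hab : monomial (α ⟨i, hi'⟩) (1 : K) • (Submodule.Quotient.mk f :
          R ⧸ (Ideal.ofList (rs.take i) • ⊤ : Submodule R R)) =
          monomial (α ⟨i, hi'⟩) (1 : K) • Submodule.Quotient.mk g := hab
      rw [← Submodule.Quotient.mk_smul, ← Submodule.Quotient.mk_smul, Submodule.Quotient.eq] at hab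
      rw [Submodule.Quotient.eq]
      have hI : (Ideal.ofList (rs.take i) • ⊤ : Submodule R R)
          = Ideal.span ((fun s => monomial s (1 : K)) '' (α '' {j : Fin r | (j : ℕ) < i})) := by
        rw [smul_eq_mul, Ideal.mul_top, hrs, span_take]
      rw [hI] at hab ⊢
      have hab' : monomial (α ⟨i, hi'⟩) (1 : K) * (f - g) ∈
          Ideal.span ((fun s => monomial s (1 : K)) '' (α '' {j : Fin r | (j : ℕ) < i})) := by
        rw [mul_sub]
        simpa [smul_eq_mul] using hab
      rw [mem_span_iff] at hab' ⊢
      intro m hm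
      have hcoeff : coeff (α ⟨i, hi'⟩ + m) (monomial (α ⟨i, hi'⟩) (1 : K) * (f - g)) =
          coeff m (f - g) := by
        rw [coeff_monomial_mul, one_mul]
      have hmem : α ⟨i, hi'⟩ + m ∈ (monomial (α ⟨i, hi'⟩) (1 : K) * (f - g)).support := by
        rw [mem_support_iff, hcoeff]
        exact mem_support_iff.mp hm
      obtain ⟨j, hj, hle⟩ := hab' _ hmem
      refine ⟨j, hj, ?_⟩
      intro y
      by_cases hy : α j y = 0
      · simp [hy]
      · have hji : j ≠ ⟨i, hi'⟩ := by
          intro h; rw [h] at hj; exact absurd hj (lt_irrefl _)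
        have hd := hdisj j ⟨i, hi'⟩ hji
        have hzy : α ⟨i, hi'⟩ y = 0 := by
          by_contra hz
          exact Finset.disjoint_left.mp hd (Finsupp.mem_support_iff.mpr hy)
            (Finsupp.mem_support_iff.mpr hz)
        have := hle y
        rw [Finsupp.add_apply, hzy] at this
        simpa using this
    · intro heq
      have h1 : (1 : R) ∈ (Ideal.ofList rs • ⊤ : Submodule R R) := heq ▸ Submodule.mem_top
      rw [smul_eq_mul, Ideal.mul_top] at h1
      have htake : rs.take r = rs := List.take_of_length_le (by rw [hlen])
      rw [← htake, hrs, span_take, mem_span_iff] at h1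
      obtain ⟨j, _, hle⟩ := h1 0 (by rw [mem_support_iff]; simp)
      exact hα j (le_antisymm hle zero_le)
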